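/- Let z be a primitive element of Mat_2(Z_p) (i.e., z ∉ p·Mat_2(Z_p)). Then for every integer N with 0 ≤ N ≤ v_p(det z), there is a unique left ideal of Mat_2(Z_p) of norm p^N containing z. -/

import Mathlib

open Matrix

/-- A matrix over `ℤ_p` is primitive if it is not in `p·Mat₂(ℤ_p)`. -/
def PrimitiveMat (p : ℕ) [Fact p.Prime] (g : Matrix (Fin 2) (Fin 2) ℤ_[p]) : Prop :=
  ∃ i j, ¬ (p : ℤ_[p]) ∣ g i j

/-- A left ideal of `Mat₂(ℤ_p)` has norm `p^N` if it is generated by an element whose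
determinant (reduced norm) has valuation `N`. -/
def hasNorm (p : ℕ) [Fact p.Prime] (I : Ideal (Matrix (Fin 2) (Fin 2) ℤ_[p])) (N : ℕ) : Prop :=
  ∃ g : Matrix (Fin 2) (Fin 2) ℤ_[p], I = Ideal.span {g} ∧ ‖g.det‖ = (p : ℝ) ^ (-(N : ℤ))

open PadicInt

variable {p : ℕ} [Fact p.Prime]

lemma PadicInt.valuation_nonneg (x : ℤ_[p]) : (0:ℤ) ≤ (x.valuation : ℤ) := by positivity

lemma ppos : (0:ℝ) < (p:ℝ) := by exact_mod_cast (Fact.out : p.Prime).pos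

lemma val_mul {x y : ℤ_[p]} (hx : x ≠ 0) (hy : y ≠ 0) :
    (x * y).valuation = x.valuation + y.valuation := by
  have hxy : x * y ≠ 0 := mul_ne_zero hx hy
  have h := norm_mul x y
  rw [norm_eq_zpow_neg_valuation hxy, norm_eq_zpow_neg_valuation hx, norm_eq_zpow_neg_valuation hy, ← zpow_add₀ (ppos (p := p)).ne', ← neg_add] at h
  have hp1 : (1:ℝ) < (p:ℝ) := by exact_mod_cast (Fact.out : p.Prime).one_lt
  exact_mod_cast neg_injective ((zpow_right_injective₀ ppos hp1.ne') h)

lemma dvd_of_le_val {x y : ℤ_[p]} (hx : x ≠ 0) (hy : y ≠ 0)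
    (h : x.valuation ≤ y.valuation) : x ∣ y := by
  have h' : x.valuation ≤ y.valuation := by
    have := x.valuation_nonneg; have := y.valuation_nonneg; omega
  rw [unitCoeff_spec hx, unitCoeff_spec hy]
  exact mul_dvd_mul ((unitCoeff hx).isUnit.dvd) (pow_dvd_pow _ h')

lemma unit_mul_of_val_eq {x y : ℤ_[p]} (hx : x ≠ 0) (hy : y ≠ 0)
    (h : x.valuation = y.valuation) : ∃ W : ℤ_[p], IsUnit W ∧ W * x = y := by
  obtain ⟨t, ht⟩ := dvd_of_le_val hx hy h.le
  obtain ⟨s, hs⟩ := dvd_of_le_val hy hx h.ge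
  refine ⟨t, IsUnit.of_mul_eq_one s ?_, by rw [mul_comm, ← ht]⟩
  have : x * (t * s) = x * 1 := by rw [mul_one, ← mul_assoc, ← ht, ← hs]
  exact mul_left_cancel₀ hx this

lemma isUnit_iff_val_eq_zero {x : ℤ_[p]} (hx : x ≠ 0) : IsUnit x ↔ x.valuation = 0 := by
  rw [isUnit_iff, norm_eq_zpow_neg_valuation hx]
  constructor
  · intro h
    have hp1 : (1:ℝ) < (p:ℝ) := by exact_mod_cast (Fact.out : p.Prime).one_lt
    have := zpow_right_injective₀ ppos hp1.ne' (h.trans (zpow_zero _).symm)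
    omega
  · intro h; rw [h]; simp

lemma isUnit_iff_not_p_dvd {x : ℤ_[p]} : IsUnit x ↔ ¬ (p:ℤ_[p]) ∣ x := by
  rw [isUnit_iff, ← norm_lt_one_iff_dvd, not_lt]
  constructor
  · intro h; rw [h]
  · intro h; exact le_antisymm x.norm_le_one h

lemma dvd_of_norm_le {x y : ℤ_[p]} (h : ‖y‖ ≤ ‖x‖) : x ∣ y := by
  rcases eq_or_ne y 0 with rfl | hy
  · exact dvd_zero x
  rcases eq_or_ne x 0 with rfl | hx
  · rw [norm_zero] at h
    exact absurd (le_antisymm h (norm_nonneg y)) (norm_ne_zero_iff.mpr hy)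
  have hp1 : (1:ℝ) < (p:ℝ) := by exact_mod_cast (Fact.out : p.Prime).one_lt
  rw [norm_eq_zpow_neg_valuation hx, norm_eq_zpow_neg_valuation hy, (zpow_right_strictMono₀ hp1).le_iff_le] at h
  exact dvd_of_le_val hx hy (by omega)

lemma mem_span_singleton_iff (g m : Matrix (Fin 2) (Fin 2) ℤ_[p]) :
    m ∈ Ideal.span {g} ↔ ∃ a, a * g = m := by
  rw [Ideal.span, Submodule.mem_span_singleton]
  simp [smul_eq_mul]

lemma span_unit_mul {u g : Matrix (Fin 2) (Fin 2) ℤ_[p]} (hu : IsUnit u) :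
    Ideal.span {u * g} = Ideal.span {g} := by
  obtain ⟨v, hv⟩ := hu.exists_left_inv
  apply le_antisymm
  · rw [Ideal.span_le]
    intro x hx
    simp only [Set.mem_singleton_iff] at hx
    subst hx
    exact (mem_span_singleton_iff _ _).mpr ⟨u, rfl⟩
  · rw [Ideal.span_le]
    intro x hx
    simp only [Set.mem_singleton_iff] at hx
    subst hx
    exact (mem_span_singleton_iff _ _).mpr ⟨v, by rw [← mul_assoc, hv, one_mul]⟩

lemma triangularize (A : Matrix (Fin 2) (Fin 2) ℤ_[p]) :
    ∃ u : Matrix (Fin 2) (Fin 2) ℤ_[p], IsUnit u ∧ (u * A) 1 0 = 0 := by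
  rcases le_or_gt ‖A 1 0‖ ‖A 0 0‖ with h | h
  · obtain ⟨q, hq⟩ := dvd_of_norm_le h
    refine ⟨!![1,0;-q,1], ?_, ?_⟩
    · rw [Matrix.isUnit_iff_isUnit_det, det_fin_two_of]
      simpa using isUnit_one
    · simp [Matrix.mul_apply, Fin.sum_univ_two, hq]; ring
  · obtain ⟨q, hq⟩ := dvd_of_norm_le h.le
    refine ⟨!![0,1;1,-q], ?_, ?_⟩
    · rw [Matrix.isUnit_iff_isUnit_det, det_fin_two_of]
      simpa using isUnit_one.neg
    · simp [Matrix.mul_apply, Fin.sum_univ_two, hq]; ring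

lemma mem_span_tri_iff {α β δ c y w : ℤ_[p]} (hα : α ≠ 0) :
    !![c,y;0,w] ∈ Ideal.span {!![α,β;0,δ]} ↔
      ∃ e f h : ℤ_[p], e * α = c ∧ h * δ = w ∧ e * β + f * δ = y := by
  rw [mem_span_singleton_iff]
  constructor
  · rintro ⟨m, hm⟩
    rw [eta_fin_two m, Matrix.mul_fin_two] at hm
    have h00 := congrFun (congrFun hm 0) 0
    have h01 := congrFun (congrFun hm 0) 1
    have h10 := congrFun (congrFun hm 1) 0
    have h11 := congrFun (congrFun hm 1) 1
    simp at h00 h01 h10 h11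
    have hg : m 1 0 = 0 := by
      rcases h10 with h | h
      · exact h
      · exact absurd h hα
    refine ⟨m 0 0, m 0 1, m 1 1, by simpa using h00, ?_, by rw [← h01]⟩
    rw [hg] at h11; simpa using h11
  · rintro ⟨e, f, h, h1, h2, h3⟩
    refine ⟨!![e,f;0,h], ?_⟩
    rw [Matrix.mul_fin_two]
    ext i j
    fin_cases i <;> fin_cases j <;> simp [← h1, ← h2, ← h3] <;> ring

lemma val_eq_zero_of_isUnit {x : ℤ_[p]} (h : IsUnit x) : x.valuation = 0 :=
  (isUnit_iff_val_eq_zero h.ne_zero).mp h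

lemma one_le_val_of_not_isUnit {x : ℤ_[p]} (hx : x ≠ 0) (h : ¬ IsUnit x) : 1 ≤ x.valuation := by
  have h0 := x.valuation_nonneg
  rcases eq_or_lt_of_le h0 with he | hl
  · exact absurd ((isUnit_iff_val_eq_zero hx).mpr (by exact_mod_cast he.symm)) h
  · omega

lemma key {c y w α β δ α' β' δ' : ℤ_[p]} {N : ℕ}
    (hprim : IsUnit c ∨ IsUnit y ∨ IsUnit w)
    (hα : α ≠ 0) (hδ : δ ≠ 0) (hα' : α' ≠ 0) (hδ' : δ' ≠ 0)
    (hvT : α.valuation + δ.valuation = N)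
    (hvT' : α'.valuation + δ'.valuation = N)
    (hm : ∃ e f h : ℤ_[p], e * α = c ∧ h * δ = w ∧ e * β + f * δ = y)
    (hm' : ∃ e f h : ℤ_[p], e * α' = c ∧ h * δ' = w ∧ e * β' + f * δ' = y) :
    ∃ E F H : ℤ_[p], E * α = α' ∧ H * δ = δ' ∧ E * β + F * δ = β' := by
  obtain ⟨e, f, h, he, hh, hy⟩ := hm
  obtain ⟨e', f', h', he', hh', hy'⟩ := hm'
  -- Step 1 : valuations agree
  have hval : α.valuation = α'.valuation := by
    rcases hprim with hc | hyu | hw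
    · rw [val_eq_zero_of_isUnit (isUnit_of_mul_isUnit_right (he ▸ hc)),
        val_eq_zero_of_isUnit (isUnit_of_mul_isUnit_right (he' ▸ hc))]
    · -- y is a unit
      by_cases hδu : IsUnit δ <;> by_cases hδu' : IsUnit δ'
      · have := val_eq_zero_of_isUnit hδu
        have := val_eq_zero_of_isUnit hδu'
        omega
      · -- δ unit, δ' not : contradiction
        exfalso
        have hfd' : ¬ IsUnit (f' * δ') := fun hu => hδu' (isUnit_of_mul_isUnit_right hu)
        have heb' : IsUnit (e' * β') :=
          ((IsLocalRing.isUnit_or_isUnit_of_isUnit_add (hy' ▸ hyu)).resolve_right hfd')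
        have he'u : IsUnit e' := isUnit_of_mul_isUnit_left heb'
        have hcne : c ≠ 0 := he' ▸ mul_ne_zero he'u.ne_zero hα'
        have hene : e ≠ 0 := fun h0 => hcne (by rw [← he, h0, zero_mul])
        have hvc1 : c.valuation = e'.valuation + α'.valuation := he' ▸ val_mul he'u.ne_zero hα'
        have hvc2 : c.valuation = e.valuation + α.valuation := he ▸ val_mul hene hα
        have h1 := val_eq_zero_of_isUnit he'u
        have h2 := val_eq_zero_of_isUnit hδu
        have h3 := one_le_val_of_not_isUnit hδ' hδu'
        have h4 := e.valuation_nonneg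
        omega
      · -- δ' unit, δ not : contradiction
        exfalso
        have hfd : ¬ IsUnit (f * δ) := fun hu => hδu (isUnit_of_mul_isUnit_right hu)
        have heb : IsUnit (e * β) :=
          ((IsLocalRing.isUnit_or_isUnit_of_isUnit_add (hy ▸ hyu)).resolve_right hfd)
        have heu : IsUnit e := isUnit_of_mul_isUnit_left heb
        have hcne : c ≠ 0 := he ▸ mul_ne_zero heu.ne_zero hα
        have hene' : e' ≠ 0 := fun h0 => hcne (by rw [← he', h0, zero_mul])
        have hvc1 : c.valuation = e.valuation + α.valuation := he ▸ val_mul heu.ne_zero hα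
        have hvc2 : c.valuation = e'.valuation + α'.valuation := he' ▸ val_mul hene' hα'
        have h1 := val_eq_zero_of_isUnit heu
        have h2 := val_eq_zero_of_isUnit hδu'
        have h3 := one_le_val_of_not_isUnit hδ hδu
        have h4 := e'.valuation_nonneg
        omega
      · -- both non-units
        have hfd : ¬ IsUnit (f * δ) := fun hu => hδu (isUnit_of_mul_isUnit_right hu)
        have heu : IsUnit e :=
          isUnit_of_mul_isUnit_left
            ((IsLocalRing.isUnit_or_isUnit_of_isUnit_add (hy ▸ hyu)).resolve_right hfd)
        have hfd' : ¬ IsUnit (f' * δ') := fun hu => hδu' (isUnit_of_mul_isUnit_right hu)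
        have he'u : IsUnit e' :=
          isUnit_of_mul_isUnit_left
            ((IsLocalRing.isUnit_or_isUnit_of_isUnit_add (hy' ▸ hyu)).resolve_right hfd')
        have hvc1 : c.valuation = e.valuation + α.valuation := he ▸ val_mul heu.ne_zero hα
        have hvc2 : c.valuation = e'.valuation + α'.valuation := he' ▸ val_mul he'u.ne_zero hα'
        have h1 := val_eq_zero_of_isUnit heu
        have h2 := val_eq_zero_of_isUnit he'u
        omega
    · -- w is a unit
      have h1 := val_eq_zero_of_isUnit (isUnit_of_mul_isUnit_right (hh ▸ hw))
      have h2 := val_eq_zero_of_isUnit (isUnit_of_mul_isUnit_right (hh' ▸ hw))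
      omega
  have hvalδ : δ.valuation = δ'.valuation := by omega
  obtain ⟨E, hEu, hE⟩ := unit_mul_of_val_eq hα hα' hval
  obtain ⟨H, hHu, hH⟩ := unit_mul_of_val_eq hδ hδ' hvalδ
  have hdvd : ∃ F, F * δ = β' - E * β := by
    by_cases hδu : IsUnit δ
    · obtain ⟨v, hv⟩ := hδu.exists_left_inv
      exact ⟨(β' - E * β) * v, by rw [mul_assoc, hv, mul_one]⟩
    · have he'u : IsUnit e' := by
        rcases hprim with hc | hyu | hw
        · exact isUnit_of_mul_isUnit_left (he' ▸ hc)
        · have hδu' : ¬ IsUnit δ' := fun hu =>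
            hδu ((isUnit_iff_val_eq_zero hδ).mpr (hvalδ ▸ val_eq_zero_of_isUnit hu))
          have hfd' : ¬ IsUnit (f' * δ') := fun hu => hδu' (isUnit_of_mul_isUnit_right hu)
          exact isUnit_of_mul_isUnit_left
            ((IsLocalRing.isUnit_or_isUnit_of_isUnit_add (hy' ▸ hyu)).resolve_right hfd')
        · exact absurd (isUnit_of_mul_isUnit_right (hh ▸ hw)) hδu
      have hee : e' * E = e := by
        have h0 : (e' * E - e) * α = 0 := by
          rw [sub_mul, mul_assoc, hE, he', he, sub_self]
        exact sub_eq_zero.mp ((mul_eq_zero.mp h0).resolve_right hα)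
      obtain ⟨u', hu'⟩ := he'u.exists_left_inv
      refine ⟨u' * (f - f' * H), ?_⟩
      have key2 : e' * (β' - E * β) = (f - f' * H) * δ := by
        have hb : e' * β' = y - f' * δ' := by rw [← hy']; ring
        calc e' * (β' - E * β) = e' * β' - (e' * E) * β := by ring
          _ = (y - f' * δ') - e * β := by rw [hb, hee]
          _ = f * δ - f' * δ' := by rw [← hy]; ring
          _ = (f - f' * H) * δ := by rw [← hH]; ring
      calc (u' * (f - f' * H)) * δ = u' * ((f - f' * H) * δ) := by ring
        _ = u' * (e' * (β' - E * β)) := by rw [key2]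
        _ = (u' * e') * (β' - E * β) := by ring
        _ = β' - E * β := by rw [hu', one_mul]
  obtain ⟨F, hF⟩ := hdvd
  exact ⟨E, F, H, hE, hH, by rw [hF]; ring⟩

lemma p_ne_zero' : ((p:ℤ_[p])) ≠ 0 := by
  have := (Fact.out : p.Prime).ne_zero
  exact_mod_cast Nat.cast_ne_zero.mpr this

lemma p_pow_ne_zero' (n : ℕ) : ((p:ℤ_[p]))^n ≠ 0 := pow_ne_zero n p_ne_zero'

lemma val_p_pow (n : ℕ) : ((p:ℤ_[p])^n).valuation = n := by
  simpa using PadicInt.valuation_p_pow_mul (p := p) n 1 one_ne_zero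

lemma pow_dvd_iff {x : ℤ_[p]} (hx : x ≠ 0) (n : ℕ) :
    (p:ℤ_[p])^n ∣ x ↔ (n:ℤ) ≤ x.valuation := by
  rw [← Ideal.mem_span_singleton, PadicInt.mem_span_pow_iff_le_valuation x hx]
  exact_mod_cast Iff.rfl

lemma norm_det_iff {g : Matrix (Fin 2) (Fin 2) ℤ_[p]} {N : ℕ}
    (h : ‖g.det‖ = (p:ℝ) ^ (-(N:ℤ))) : g.det ≠ 0 ∧ g.det.valuation = N := by
  have hp1 : (1:ℝ) < (p:ℝ) := by exact_mod_cast (Fact.out : p.Prime).one_lt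
  have hne : g.det ≠ 0 := by
    intro h0
    rw [h0, norm_zero] at h
    exact absurd h.symm (ne_of_gt (by positivity))
  refine ⟨hne, ?_⟩
  rw [PadicInt.norm_eq_zpow_neg_valuation hne] at h
  have := zpow_right_injective₀ (ppos (p := p)) hp1.ne' h
  omega

lemma tri_decomp (A : Matrix (Fin 2) (Fin 2) ℤ_[p]) (hA : A.det ≠ 0) :
    ∃ (u : Matrix (Fin 2) (Fin 2) ℤ_[p]) (c y w : ℤ_[p]), IsUnit u ∧ u * A = !![c,y;0,w] ∧
      c ≠ 0 ∧ w ≠ 0 ∧ c.valuation + w.valuation = A.det.valuation := by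
  obtain ⟨u, hu, h10⟩ := triangularize A
  refine ⟨u, (u*A) 0 0, (u*A) 0 1, (u*A) 1 1, hu, ?_, ?_⟩
  · ext i j
    fin_cases i <;> fin_cases j <;> simp [h10]
  · have hdu : IsUnit u.det := (Matrix.isUnit_iff_isUnit_det u).mp hu
    have hdet : (u*A).det = u.det * A.det := det_mul u A
    have hne : (u*A).det ≠ 0 := hdet ▸ mul_ne_zero hdu.ne_zero hA
    have hcw : (u*A).det = (u*A) 0 0 * (u*A) 1 1 := by
      rw [det_fin_two, h10, mul_zero, sub_zero]
    have hc : (u*A) 0 0 ≠ 0 := fun h0 => hne (by rw [hcw, h0, zero_mul])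
    have hw : (u*A) 1 1 ≠ 0 := fun h0 => hne (by rw [hcw, h0, mul_zero])
    refine ⟨hc, hw, ?_⟩
    have h1 : ((u*A) 0 0 * (u*A) 1 1).valuation = ((u*A) 0 0).valuation + ((u*A) 1 1).valuation :=
      val_mul hc hw
    have h2 : (u.det * A.det).valuation = A.det.valuation := by
      rw [val_mul hdu.ne_zero hA, val_eq_zero_of_isUnit hdu, zero_add]
    rw [← h1, ← hcw, hdet, h2]

lemma mem_iff_unit_mul {u A : Matrix (Fin 2) (Fin 2) ℤ_[p]} (hu : IsUnit u)
    (I : Ideal (Matrix (Fin 2) (Fin 2) ℤ_[p])) : u * A ∈ I ↔ A ∈ I := by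
  obtain ⟨v, hv⟩ := hu.exists_left_inv
  constructor
  · intro h
    have := I.smul_mem v h
    rwa [smul_eq_mul, ← mul_assoc, hv, one_mul] at this
  · intro h
    simpa [smul_eq_mul] using I.smul_mem u h

lemma prim_transfer {u z : Matrix (Fin 2) (Fin 2) ℤ_[p]} {c y w : ℤ_[p]} (hu : IsUnit u)
    (h : u * z = !![c,y;0,w]) (hz : PrimitiveMat p z) : IsUnit c ∨ IsUnit y ∨ IsUnit w := by
  by_contra hcon
  push_neg at hcon
  obtain ⟨hc, hy, hw⟩ := hcon
  rw [isUnit_iff_not_p_dvd, not_not] at hc hy hw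
  have hall : ∀ i j, (p:ℤ_[p]) ∣ (u * z) i j := by
    rw [h]; intro i j
    fin_cases i <;> fin_cases j <;> simpa using by assumption
  obtain ⟨v, hv⟩ := hu.exists_left_inv
  obtain ⟨i, j, hij⟩ := hz
  apply hij
  have hzv : z = v * (u * z) := by rw [← mul_assoc, hv, one_mul]
  rw [hzv, Matrix.mul_apply, Fin.sum_univ_two]
  exact dvd_add ((hall 0 j).mul_left _) ((hall 1 j).mul_left _)

theorem stmt4 (p : ℕ) [Fact p.Prime] (z : Matrix (Fin 2) (Fin 2) ℤ_[p])
    (hz : PrimitiveMat p z) (N : ℕ) (hN : (N : ℤ) ≤ z.det.valuation) :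
    ∃! I : Ideal (Matrix (Fin 2) (Fin 2) ℤ_[p]), hasNorm p I N ∧ z ∈ I := by
  obtain rfl | hpos := Nat.eq_zero_or_pos N
  · refine ⟨⊤, ⟨⟨1, (Ideal.span_singleton_one).symm, by simp⟩, trivial⟩, ?_⟩
    rintro I ⟨⟨g, rfl, hng⟩, -⟩
    have hdet : IsUnit g.det := PadicInt.isUnit_iff.mpr (by simpa using hng)
    have hg : IsUnit g := (Matrix.isUnit_iff_isUnit_det g).mpr hdet
    obtain ⟨v, hv⟩ := hg.exists_left_inv
    exact (Ideal.eq_top_iff_one _).mpr ((mem_span_singleton_iff _ _).mpr ⟨v, hv⟩)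
  · have hdetz : z.det ≠ 0 := by
      intro h0
      rw [h0, PadicInt.valuation_zero] at hN
      omega
    obtain ⟨u, c, y, w, hu, hZ, hc0, hw0, hval⟩ := tri_decomp z hdetz
    have hprim := prim_transfer hu hZ hz
    have hk : (N:ℤ) ≤ c.valuation + w.valuation := by rw [← hval] at hN; exact_mod_cast hN
    have hcv := c.valuation_nonneg
    have hwv := w.valuation_nonneg
    obtain ⟨α₀, β₀, δ₀, hα₀, hδ₀, hvalT₀, hnorm₀, hmem₀⟩ :
        ∃ α₀ β₀ δ₀ : ℤ_[p], α₀ ≠ 0 ∧ δ₀ ≠ 0 ∧ α₀.valuation + δ₀.valuation = (N:ℤ) ∧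
          ‖(!![α₀,β₀;0,δ₀] : Matrix (Fin 2) (Fin 2) ℤ_[p]).det‖ = (p:ℝ)^(-(N:ℤ)) ∧
          (∃ e f h : ℤ_[p], e*α₀ = c ∧ h*δ₀ = w ∧ e*β₀ + f*δ₀ = y) := by
      by_cases hcN : (p:ℤ_[p])^N ∣ c
      · obtain ⟨q, hq⟩ := hcN
        refine ⟨(p:ℤ_[p])^N, 0, 1, p_pow_ne_zero' N, one_ne_zero, ?_, ?_,
          q, y, w, by rw [hq]; ring, mul_one w, by ring⟩
        · rw [val_p_pow, PadicInt.valuation_one]; ring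
        · rw [det_fin_two_of]
          simpa using PadicInt.norm_p_pow (p := p) N
      · have haN : ¬ ((N:ℤ) ≤ c.valuation) := fun h => hcN ((pow_dvd_iff hc0 N).mpr h)
        have haval : (c.valuation : ℤ) = c.valuation := rfl
        set a := c.valuation with ha
        have haltN : a < N := by omega
        have hwd : (p:ℤ_[p])^(N-a) ∣ w := (pow_dvd_iff hw0 (N-a)).mpr (by push_cast; omega)
        obtain ⟨h', hh'⟩ := hwd
        refine ⟨(p:ℤ_[p])^a, ((PadicInt.unitCoeff hc0)⁻¹ : ℤ_[p]ˣ) * y, (p:ℤ_[p])^(N-a),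
          p_pow_ne_zero' a, p_pow_ne_zero' (N-a), ?_, ?_,
          (PadicInt.unitCoeff hc0 : ℤ_[p]), 0, h',
          (PadicInt.unitCoeff_spec hc0).symm, by rw [hh']; ring, by simp⟩
        · rw [val_p_pow, val_p_pow]; push_cast; omega
        · rw [det_fin_two_of]
          have hpow : (p:ℤ_[p])^a * (p:ℤ_[p])^(N-a) = (p:ℤ_[p])^N := by
            rw [← pow_add]; congr 1; omega
          rw [mul_zero, sub_zero, hpow]
          exact PadicInt.norm_p_pow (p := p) N
    have hZmem : (!![c,y;0,w] : Matrix (Fin 2) (Fin 2) ℤ_[p]) ∈ Ideal.span {!![α₀,β₀;0,δ₀]} :=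
      (mem_span_tri_iff hα₀).mpr hmem₀
    refine ⟨Ideal.span {!![α₀,β₀;0,δ₀]}, ⟨⟨!![α₀,β₀;0,δ₀], rfl, hnorm₀⟩, ?_⟩, ?_⟩
    · exact (mem_iff_unit_mul hu _).mp (hZ ▸ hZmem)
    · rintro I ⟨⟨g, rfl, hng⟩, hzI⟩
      obtain ⟨hgdet, hgval⟩ := norm_det_iff hng
      obtain ⟨ug, α, β', δ, hug, hT, hα, hδ, hvalT⟩ := tri_decomp g hgdet
      rw [hgval] at hvalT
      have hspan : Ideal.span {g} = Ideal.span {!![α,β';0,δ]} := by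
        rw [← hT, span_unit_mul hug]
      have hZI : (!![c,y;0,w] : Matrix (Fin 2) (Fin 2) ℤ_[p]) ∈ Ideal.span {g} := by
        rw [← hZ]
        exact (mem_iff_unit_mul hu _).mpr hzI
      have hmT : ∃ e f h : ℤ_[p], e*α = c ∧ h*δ = w ∧ e*β' + f*δ = y :=
        (mem_span_tri_iff hα).mp (hspan ▸ hZI)
      have hsub1 : (!![α₀,β₀;0,δ₀] : Matrix (Fin 2) (Fin 2) ℤ_[p]) ∈ Ideal.span {!![α,β';0,δ]} :=
        (mem_span_tri_iff hα).mpr (key hprim hα hδ hα₀ hδ₀ hvalT (by exact_mod_cast hvalT₀) hmT hmem₀)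
      have hsub2 : (!![α,β';0,δ] : Matrix (Fin 2) (Fin 2) ℤ_[p]) ∈ Ideal.span {!![α₀,β₀;0,δ₀]} :=
        (mem_span_tri_iff hα₀).mpr (key hprim hα₀ hδ₀ hα hδ (by exact_mod_cast hvalT₀) hvalT hmem₀ hmT)
      rw [hspan]
      apply le_antisymm
      · exact Ideal.span_le.mpr (Set.singleton_subset_iff.mpr hsub2)
      · exact Ideal.span_le.mpr (Set.singleton_subset_iff.mpr hsub1)
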